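/- arXiv:2409.18670 — 2 statements merged into one kernel-verified Lean document; each statement's English description precedes it below -/
import Mathlib

section
/- Let C=(S,P) be a countable Markov chain, R ⊆ S, and suppose there exist a function L : S → ℝ≥0 and ε > 0 such that for all s ∉ R, L(s) − ∑_{s'} P(s,s')·L(s') ≥ ε. Then for every s ∉ R, the expected hitting time of R starting from s is finite and bounded by L(s)/ε; in particular R is an attractor. -/
open scoped ENNReal NNReal BigOperators
open Filter

noncomputable section

variable {S : Type*}

/-- Probability of following a finite path (list of successive states). -/
def pathProb (P : S → S → ℝ≥0∞) : List S → ℝ≥0∞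
  | [] => 1
  | [_] => 1
  | a :: b :: l => P a b * pathProb P (b :: l)

/-- `l` is a finite path starting at `s` that visits `T` for the first time
at its last element. -/
def FirstHitPath (T : Set S) (s : S) (l : List S) : Prop :=
  l.head? = some s ∧ ∃ h : l ≠ [], l.getLast h ∈ T ∧
    ∀ i : Fin l.length, (i : ℕ) + 1 < l.length → l.get i ∉ T

/-- Probability of eventually reaching `T` from `s`. -/
def reachProb (P : S → S → ℝ≥0∞) (T : Set S) (s : S) : ℝ≥0∞ :=
  ∑' l : {l : List S // FirstHitPath T s l}, pathProb P (l : List S)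

/-- The avoid set: states from which `T` is unreachable. -/
def Av (P : S → S → ℝ≥0∞) (T : Set S) : Set S := {s | reachProb P T s = 0}

/-- Probability that, starting from `s`, the chain stays outside `R`
during its first `n` steps (i.e. the hitting time of `R` is `> n`). -/
def surviveProb (P : S → S → ℝ≥0∞) (R : Set S) (s : S) (n : ℕ) : ℝ≥0∞ :=
  ∑' l : {l : List S // l.length = n + 1 ∧ l.head? = some s ∧ ∀ x ∈ l, x ∉ R},
    pathProb P (l : List S)

/-- Expected hitting time of `R` from `s`, via `E τ = ∑_{n≥0} Pr(τ > n)`. -/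
def expHittingTime (P : S → S → ℝ≥0∞) (R : Set S) (s : S) : ℝ≥0∞ :=
  ∑' n : ℕ, surviveProb P R s n

/-- Probability that `X_i ∈ A` for all `i ≥ m`, starting from `s`
(as the infimum over finite horizons). -/
def confineProb (P : S → S → ℝ≥0∞) (A : Set S) (s : S) (m : ℕ) : ℝ≥0∞ :=
  ⨅ n : ℕ, ∑' l : {l : List S // l.length = n + 1 ∧ l.head? = some s ∧
      ∀ i : Fin l.length, m ≤ (i : ℕ) → l.get i ∈ A}, pathProb P (l : List S)

/-- Expected reward collected at the first visit of `T`. -/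
def expReward (P : S → S → ℝ≥0∞) (L : List S → ℝ≥0∞) (T : Set S) (s : S) : ℝ≥0∞ :=
  ∑' l : {l : List S // FirstHitPath T s l}, L l * pathProb P (l : List S)

/-- `P` is a stochastic matrix. -/
def IsStochastic (P : S → S → ℝ≥0∞) : Prop := ∀ s, ∑' s', P s s' = 1

/-- States of the biased chain other than `s₋`. -/
abbrev SA (P : S → S → ℝ≥0∞) (F : Set S) := {s : S // s ∉ Av P F}

/-- `P'` (on `(S ∖ Av(F)) ⊎ {s₋}`, with `none = s₋`) is a biased Markov chain
of `(C, T, F)`. -/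
def IsBiased (P : S → S → ℝ≥0∞) (T F : Set S)
    (P' : Option (SA P F) → Option (SA P F) → ℝ≥0∞) : Prop :=
  IsStochastic P' ∧
  P' none none = 1 ∧
  (∀ s : SA P F, s.val ∈ T → P' (some s) (some s) = 1) ∧
  (∀ s s' : SA P F, 0 < P s.val s'.val → 0 < P' (some s) (some s'))

/-- `(C^•, F^•)` together with `α` is an abstraction of `(C, F)`. -/
def IsAbstraction (P : S → S → ℝ≥0∞) (F : Set S)
    {S' : Type*} (P' : S' → S' → ℝ≥0∞) (F' : Set S')
    (α : SA P F → S') : Prop :=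
  (∀ s : SA P F, s.val ∈ F → α s ∈ F') ∧
  (∀ s : SA P F, s.val ∉ F →
    ∑' s' : SA P F, P s.val s'.val * reachProb P' F' (α s')
      ≤ reachProb P' F' (α s))

/-- The decreasing ratio `h(s)` of an abstraction. -/
def hRatio (P : S → S → ℝ≥0∞) (F : Set S)
    {S' : Type*} (P' : S' → S' → ℝ≥0∞) (F' : Set S')
    (α : SA P F → S') (s : SA P F) : ℝ≥0∞ :=
  (∑' s' : SA P F, P s.val s'.val * reachProb P' F' (α s'))
    / reachProb P' F' (α s)

/-- The biased Markov chain constructed from an abstraction. -/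
def biasedKernel (P : S → S → ℝ≥0∞) (F : Set S)
    {S' : Type*} (P' : S' → S' → ℝ≥0∞) (F' : Set S')
    (α : SA P F → S') :
    Option (SA P F) → Option (SA P F) → ℝ≥0∞
  | none, none => 1
  | none, some _ => 0
  | some s, none => 1 - hRatio P F P' F' α s
  | some s, some s' =>
      P s.val s'.val * reachProb P' F' (α s') / reachProb P' F' (α s)

/-- The random walk `W^p` on `ℕ`: `0` absorbing, up with probability `p`,
down with probability `1 - p`. -/
def walkKernel (p : ℝ≥0∞) : ℕ → ℕ → ℝ≥0∞ := fun m n =>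
  if m = 0 then (if n = 0 then 1 else 0)
  else if n = m + 1 then p
  else if n + 1 = m then 1 - p
  else 0

/-- `(C, λ)` is a layered Markov chain. -/
def IsLMC (P : S → S → ℝ≥0∞) (lam : S → ℕ) : Prop :=
  (∀ s s', 0 < P s s' → (lam s : ℤ) ≤ (lam s' : ℤ) + 1) ∧
  (∀ n : ℕ, {s : S | lam s = n}.Finite)

/-- Total probability of increasing the level. -/
def Pup (P : S → S → ℝ≥0∞) (lam : S → ℕ) (s : S) : ℝ≥0∞ :=
  ∑' s' : {s' : S // lam s < lam s'}, P s s'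

/-- Total probability of decreasing the level (by one). -/
def Pdown (P : S → S → ℝ≥0∞) (lam : S → ℕ) (s : S) : ℝ≥0∞ :=
  ∑' s' : {s' : S // lam s' + 1 = lam s}, P s s'

/-- Total probability of keeping the same level. -/
def Peq (P : S → S → ℝ≥0∞) (lam : S → ℕ) (s : S) : ℝ≥0∞ :=
  ∑' s' : {s' : S // lam s' = lam s}, P s s'

/-- `(C, λ)` is `(p⁺, N₀)`-divergent. -/
def Divergent (P : S → S → ℝ≥0∞) (lam : S → ℕ) (pplus : ℝ≥0∞) (N₀ : ℕ) : Prop :=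
  1/2 < pplus ∧ ∀ s : S, N₀ < lam s → Peq P lam s < 1 →
    pplus ≤ Pup P lam s / (Pdown P lam s + Pup P lam s)

end

open scoped Classical

noncomputable section AuxFoster

variable {S : Type*}

lemma pathProb_cons (P : S → S → ℝ≥0∞) (a b : S) (t : List S) (h : t.head? = some b) :
    pathProb P (a :: t) = P a b * pathProb P t := by
  cases t with
  | nil => simp at h
  | cons c r =>
    simp only [List.head?_cons, Option.some.injEq] at h
    subst h; rfl

lemma pathProb_single (P : S → S → ℝ≥0∞) (s : S) : pathProb P [s] = 1 := rfl

lemma eq_single_of_len_one {l : List S} {s : S} (h1 : l.length = 1)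
    (h2 : l.head? = some s) : l = [s] := by
  obtain ⟨a, rfl⟩ := List.length_eq_one_iff.mp h1
  simp only [List.head?_cons, Option.some.injEq] at h2
  rw [h2]

lemma survive_mem (P : S → S → ℝ≥0∞) (R : Set S) {s : S} (hs : s ∈ R) (n : ℕ) :
    surviveProb P R s n = 0 := by
  have : IsEmpty {l : List S // l.length = n + 1 ∧ l.head? = some s ∧ ∀ x ∈ l, x ∉ R} := by
    constructor
    rintro ⟨l, hl, hh, hav⟩
    exact hav s (List.mem_of_mem_head? (by rw [hh]; rfl)) hs
  exact tsum_empty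

lemma survive_zero (P : S → S → ℝ≥0∞) (R : Set S) {s : S} (hs : s ∉ R) :
    surviveProb P R s 0 = 1 := by
  rw [surviveProb,
    tsum_eq_single (⟨[s], by simp, rfl, by simpa using hs⟩ :
      {l : List S // l.length = 0 + 1 ∧ l.head? = some s ∧ ∀ x ∈ l, x ∉ R})]
  · rfl
  · rintro ⟨l, hl, hh, hav⟩ hne
    exact absurd (Subtype.ext (eq_single_of_len_one hl hh)) hne

def consEquiv (R : Set S) (s : S) (hs : s ∉ R) (n : ℕ) :
    (Σ s' : S, {l : List S // l.length = n + 1 ∧ l.head? = some s' ∧ ∀ x ∈ l, x ∉ R}) ≃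
      {l : List S // l.length = n + 1 + 1 ∧ l.head? = some s ∧ ∀ x ∈ l, x ∉ R} where
  toFun x := ⟨s :: x.2.val, by
    obtain ⟨s', t, h1, h2, h3⟩ := x
    refine ⟨by simp [h1], rfl, ?_⟩
    intro y hy
    rcases List.mem_cons.mp hy with rfl | hy
    · exact hs
    · exact h3 y hy⟩
  invFun x := ⟨x.val.tail.head (by
      have h1 := x.2.1
      intro hnil
      have h2 : x.val.tail.length = n + 1 := by simp [h1]
      simp [hnil] at h2),
    ⟨x.val.tail, by simp [x.2.1], List.head?_eq_head _,
      fun y hy => x.2.2.2 y (List.mem_of_mem_tail hy)⟩⟩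
  left_inv := by
    rintro ⟨s', t, h1, h2, h3⟩
    have ht : t ≠ [] := by rintro rfl; simp at h2
    have hh : t.head ht = s' := by
      rw [List.head?_eq_head ht] at h2
      exact Option.some_inj.mp h2
    subst hh
    rfl
  right_inv := by
    rintro ⟨l, h1, h2, h3⟩
    exact Subtype.ext (List.cons_head?_tail (by rw [h2]; rfl))

lemma survive_succ (P : S → S → ℝ≥0∞) (R : Set S) {s : S} (hs : s ∉ R) (n : ℕ) :
    surviveProb P R s (n + 1) = ∑' s', P s s' * surviveProb P R s' n := by
  rw [surviveProb, ← Equiv.tsum_eq (consEquiv R s hs n)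
    (fun l => pathProb P (l : List S)), ENNReal.tsum_sigma']
  refine tsum_congr fun s' => ?_
  rw [surviveProb, ← ENNReal.tsum_mul_left]
  exact tsum_congr fun t => pathProb_cons P s s' t.val t.2.2.1

lemma fhp_single {R : Set S} {s : S} (hs : s ∈ R) : FirstHitPath R s [s] := by
  refine ⟨rfl, by simp, by simpa using hs, ?_⟩
  intro i hi
  simp at hi

lemma fhp_of_mem {R : Set S} {s : S} {l : List S} (hs : s ∈ R)
    (hl : FirstHitPath R s l) : l = [s] := by
  obtain ⟨hh, hne, hlast, hmid⟩ := hl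
  cases l with
  | nil => exact absurd rfl hne
  | cons a t =>
    simp only [List.head?_cons, Option.some.injEq] at hh
    subst hh
    cases t with
    | nil => rfl
    | cons b r =>
      exact absurd hs (by simpa using hmid ⟨0, by simp⟩ (by simp))

lemma reach_mem (P : S → S → ℝ≥0∞) {R : Set S} {s : S} (hs : s ∈ R) :
    reachProb P R s = 1 := by
  rw [reachProb, tsum_eq_single (⟨[s], fhp_single hs⟩ : {l : List S // FirstHitPath R s l})]
  · rfl
  · rintro ⟨l, hl⟩ hne
    exact absurd (Subtype.ext (fhp_of_mem hs hl)) hne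

def hitBy (P : S → S → ℝ≥0∞) (R : Set S) (s : S) (n : ℕ) : ℝ≥0∞ :=
  ∑' l : {l : List S // FirstHitPath R s l ∧ l.length ≤ n + 1}, pathProb P (l : List S)

lemma hitBy_mem (P : S → S → ℝ≥0∞) {R : Set S} {s : S} (hs : s ∈ R) (n : ℕ) :
    hitBy P R s n = 1 := by
  rw [hitBy, tsum_eq_single (⟨[s], fhp_single hs, by simp⟩ :
    {l : List S // FirstHitPath R s l ∧ l.length ≤ n + 1})]
  · rfl
  · rintro ⟨l, hl, _⟩ hne
    exact absurd (Subtype.ext (fhp_of_mem hs hl)) hne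

lemma fhp_shape {R : Set S} {s : S} {l : List S} (hs : s ∉ R)
    (hl : FirstHitPath R s l) : l = s :: l.tail ∧ l.tail ≠ [] := by
  obtain ⟨hh, hne, hlast, hmid⟩ := hl
  have h1 : s :: l.tail = l := List.cons_head?_tail (by rw [hh]; rfl)
  refine ⟨h1.symm, ?_⟩
  intro h2
  have : l = [s] := by rw [← h1, h2]
  subst this
  exact hs (by simpa using hlast)

lemma hitBy_zero (P : S → S → ℝ≥0∞) {R : Set S} {s : S} (hs : s ∉ R) :
    hitBy P R s 0 = 0 := by
  have : IsEmpty {l : List S // FirstHitPath R s l ∧ l.length ≤ 0 + 1} := by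
    constructor
    rintro ⟨l, hl, hlen⟩
    obtain ⟨h1, h2⟩ := fhp_shape hs hl
    rw [h1, List.length_cons] at hlen
    exact h2 (List.eq_nil_of_length_eq_zero (by omega))
  exact tsum_empty

lemma fhp_cons_iff {R : Set S} {s s' : S} (hs : s ∉ R) (t : List S) (hne : t ≠ [])
    (hh : t.head? = some s') :
    FirstHitPath R s (s :: t) ↔ FirstHitPath R s' t := by
  constructor
  · rintro ⟨_, _, hlast, hmid⟩
    refine ⟨hh, hne, by rw [← List.getLast_cons hne]; exact hlast, ?_⟩
    intro j hj
    have := hmid ⟨(j : ℕ) + 1, by simp only [List.length_cons]; omega⟩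
      (by simp only [List.length_cons]; omega)
    simpa [List.get_cons_succ] using this
  · rintro ⟨_, _, hlast, hmid⟩
    refine ⟨rfl, by simp, by rw [List.getLast_cons hne]; exact hlast, ?_⟩
    rintro ⟨iv, hiv⟩ hcond
    cases iv with
    | zero => simpa using hs
    | succ j =>
      simp only [List.length_cons] at hcond
      have := hmid ⟨j, by omega⟩ (by simpa using hcond)
      simpa [List.get_cons_succ] using this

def fhpConsEquiv (P : S → S → ℝ≥0∞) (R : Set S) (s : S) (hs : s ∉ R) (n : ℕ) :
    (Σ s' : S, {l : List S // FirstHitPath R s' l ∧ l.length ≤ n + 1}) ≃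
      {l : List S // FirstHitPath R s l ∧ l.length ≤ n + 1 + 1} where
  toFun x := ⟨s :: x.2.val, by
    obtain ⟨s', t, ht, hlen⟩ := x
    have hne : t ≠ [] := ht.2.1
    refine ⟨(fhp_cons_iff hs t hne ht.1).mpr ht, by simpa using hlen⟩⟩
  invFun x := by
    have hsh := fhp_shape hs x.2.1
    have hfh : FirstHitPath R s (s :: x.val.tail) := hsh.1 ▸ x.2.1
    refine ⟨x.val.tail.head hsh.2, ⟨x.val.tail,
      (fhp_cons_iff hs x.val.tail hsh.2 (List.head?_eq_head _)).mp hfh, ?_⟩⟩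
    have := x.2.2
    rw [hsh.1] at this
    simpa using this
  left_inv := by
    rintro ⟨s', t, ht, hlen⟩
    have hne : t ≠ [] := ht.2.1
    have hh : t.head hne = s' := by
      have := ht.1
      rw [List.head?_eq_head hne] at this
      exact Option.some_inj.mp this
    subst hh
    rfl
  right_inv := by
    rintro ⟨l, hl, hlen⟩
    exact Subtype.ext (fhp_shape hs hl).1.symm

lemma hitBy_succ (P : S → S → ℝ≥0∞) (R : Set S) {s : S} (hs : s ∉ R) (n : ℕ) :
    hitBy P R s (n + 1) = ∑' s', P s s' * hitBy P R s' n := by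
  rw [hitBy, ← Equiv.tsum_eq (fhpConsEquiv P R s hs n)
    (fun l => pathProb P (l : List S)), ENNReal.tsum_sigma']
  refine tsum_congr fun s' => ?_
  rw [hitBy, ← ENNReal.tsum_mul_left]
  exact tsum_congr fun t => pathProb_cons P s s' t.val t.2.1.1

lemma hitBy_add_survive (P : S → S → ℝ≥0∞) (hP : IsStochastic P) (R : Set S) :
    ∀ n s, hitBy P R s n + surviveProb P R s n = 1 := by
  intro n
  induction n with
  | zero =>
    intro s
    by_cases hs : s ∈ R
    · rw [hitBy_mem P hs, survive_mem P R hs]; simp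
    · rw [hitBy_zero P hs, survive_zero P R hs]; simp
  | succ n ih =>
    intro s
    by_cases hs : s ∈ R
    · rw [hitBy_mem P hs, survive_mem P R hs]; simp
    · rw [hitBy_succ P R hs, survive_succ P R hs, ← ENNReal.tsum_add]
      calc (∑' s', (P s s' * hitBy P R s' n + P s s' * surviveProb P R s' n))
          = ∑' s', P s s' := by
            refine tsum_congr fun s' => ?_
            rw [← mul_add, ih s', mul_one]
        _ = 1 := hP s

lemma drift_bound (P : S → S → ℝ≥0∞) (R : Set S)
    (L : S → ℝ≥0) (ε : ℝ≥0)
    (hdrift : ∀ s ∉ R, ∑' s', P s s' * (L s' : ℝ≥0∞) + (ε : ℝ≥0∞) ≤ (L s : ℝ≥0∞)) :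
    ∀ N s, (ε : ℝ≥0∞) * ∑ n ∈ Finset.range N, surviveProb P R s n ≤ (L s : ℝ≥0∞) := by
  intro N
  induction N with
  | zero => simp
  | succ N ih =>
    intro s
    by_cases hs : s ∈ R
    · simp [survive_mem P R hs]
    · have hexp : ∑ n ∈ Finset.range (N + 1), surviveProb P R s n
          = 1 + ∑' s', P s s' * ∑ n ∈ Finset.range N, surviveProb P R s' n := by
        rw [Finset.sum_range_succ']
        simp only [survive_succ P R hs, survive_zero P R hs]
        rw [← Summable.tsum_finsetSum (fun _ _ => ENNReal.summable), add_comm]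
        congr 1
        exact tsum_congr fun s' => (Finset.mul_sum _ _ _).symm
      rw [hexp, mul_add, mul_one, ← ENNReal.tsum_mul_left]
      calc (ε : ℝ≥0∞) + ∑' s', (ε : ℝ≥0∞) *
            (P s s' * ∑ n ∈ Finset.range N, surviveProb P R s' n)
          ≤ (ε : ℝ≥0∞) + ∑' s', P s s' * (L s' : ℝ≥0∞) := by
            refine add_le_add_right (ENNReal.tsum_le_tsum fun s' => ?_) _
            rw [mul_left_comm]
            exact mul_le_mul_right (ih s') _
        _ ≤ (L s : ℝ≥0∞) := by rw [add_comm]; exact hdrift s hs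

lemma iInf_survive (P : S → S → ℝ≥0∞) (R : Set S) (s : S)
    (hfin : expHittingTime P R s ≠ ⊤) : ⨅ n, surviveProb P R s n = 0 := by
  by_contra h
  apply hfin
  refine le_antisymm le_top ?_
  have htop : ∑' _ : ℕ, (⨅ m, surviveProb P R s m) = ⊤ :=
    ENNReal.tsum_const_eq_top_of_ne_zero h
  rw [expHittingTime, ← htop]
  exact ENNReal.tsum_le_tsum fun n => iInf_le _ n

lemma hitBy_le_reach (P : S → S → ℝ≥0∞) (R : Set S) (s : S) (n : ℕ) :
    hitBy P R s n ≤ reachProb P R s := by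
  have e1 : hitBy P R s n = ∑' l : List S,
      Set.indicator {l : List S | FirstHitPath R s l ∧ l.length ≤ n + 1} (pathProb P) l :=
    tsum_subtype _ _
  have e2 : reachProb P R s = ∑' l : List S,
      Set.indicator {l : List S | FirstHitPath R s l} (pathProb P) l :=
    tsum_subtype _ _
  rw [e1, e2]
  exact ENNReal.tsum_le_tsum fun l =>
    Set.indicator_le_indicator_of_subset (fun x hx => hx.1) (fun _ => zero_le) l

lemma reach_le_iSup (P : S → S → ℝ≥0∞) (R : Set S) (s : S) :
    reachProb P R s ≤ ⨆ n, hitBy P R s n := by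
  classical
  have e2 : reachProb P R s = ∑' l : List S,
      Set.indicator {l : List S | FirstHitPath R s l} (pathProb P) l :=
    tsum_subtype _ _
  rw [e2, ENNReal.tsum_eq_iSup_sum]
  refine iSup_le fun F => ?_
  refine le_trans ?_ (le_iSup _ (F.sup List.length))
  set n := F.sup List.length with hn
  calc ∑ l ∈ F, Set.indicator {l : List S | FirstHitPath R s l} (pathProb P) l
      ≤ ∑ l ∈ F, Set.indicator {l : List S | FirstHitPath R s l ∧ l.length ≤ n + 1}
          (pathProb P) l := by
        refine Finset.sum_le_sum fun l hl => ?_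
        rw [Set.indicator_apply, Set.indicator_apply]
        by_cases hfl : l ∈ {l : List S | FirstHitPath R s l}
        · rw [if_pos hfl, if_pos (show l ∈ {l : List S | FirstHitPath R s l ∧
            l.length ≤ n + 1} from ⟨hfl, le_trans (Finset.le_sup hl) (Nat.le_succ n)⟩)]
        · rw [if_neg hfl]
          exact zero_le
    _ ≤ ∑' l : List S, Set.indicator {l : List S | FirstHitPath R s l ∧ l.length ≤ n + 1}
          (pathProb P) l := ENNReal.sum_le_tsum F
    _ = hitBy P R s n := (tsum_subtype _ _).symm

end AuxFoster

section Thms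

variable {S : Type*}

theorem stmt2 [Countable S] (P : S → S → ℝ≥0∞) (hP : IsStochastic P)
    (R : Set S) (L : S → ℝ≥0) (ε : ℝ≥0) (hε : 0 < ε)
    (hdrift : ∀ s ∉ R, ∑' s', P s s' * (L s' : ℝ≥0∞) + (ε : ℝ≥0∞) ≤ (L s : ℝ≥0∞)) :
    (∀ s ∉ R, expHittingTime P R s ≤ (L s : ℝ≥0∞) / (ε : ℝ≥0∞) ∧
      expHittingTime P R s < ⊤) ∧
    ∀ s, reachProb P R s = 1 := by
  have hεne : (ε : ℝ≥0∞) ≠ 0 := by exact_mod_cast hε.ne'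
  have key : ∀ s ∉ R, expHittingTime P R s ≤ (L s : ℝ≥0∞) / (ε : ℝ≥0∞) ∧
      expHittingTime P R s < ⊤ := by
    intro s hs
    have h1 : (ε : ℝ≥0∞) * expHittingTime P R s ≤ (L s : ℝ≥0∞) := by
      rw [expHittingTime, ENNReal.tsum_eq_iSup_nat, ENNReal.mul_iSup]
      exact iSup_le fun N => drift_bound P R L ε hdrift N s
    have h2 : expHittingTime P R s ≤ (L s : ℝ≥0∞) / (ε : ℝ≥0∞) := by
      rw [ENNReal.le_div_iff_mul_le (Or.inl hεne) (Or.inl ENNReal.coe_ne_top), mul_comm]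
      exact h1
    exact ⟨h2, lt_of_le_of_lt h2 (ENNReal.div_lt_top ENNReal.coe_ne_top hεne)⟩
  refine ⟨key, fun s => ?_⟩
  by_cases hs : s ∈ R
  · exact reach_mem P hs
  · refine le_antisymm ?_ ?_
    · refine le_trans (reach_le_iSup P R s) (iSup_le fun n => ?_)
      rw [← hitBy_add_survive P hP R n s]
      exact le_self_add
    · have h0 : ⨅ n, surviveProb P R s n = 0 := iInf_survive P R s (key s hs).2.ne
      have h1 : (1 : ℝ≥0∞) = 1 - ⨅ n, surviveProb P R s n := by rw [h0, tsub_zero]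
      rw [h1, ENNReal.sub_iInf]
      refine iSup_le fun n => le_trans ?_ (hitBy_le_reach P R s n)
      rw [tsub_le_iff_right, hitBy_add_survive P hP R n s]


end Thms
end

section
/- Let (C^•,F^•) be an α-abstraction of (C,F) and define the chain C' on (S ∖ Av_C(F)) ⊎ {s₋} by P'(s,s') = P(s,s')·μ^•(α(s'))/μ^•(α(s)) for s,s' ∈ S ∖ Av_C(F), P'(s,s₋) = 1 − h(s) with decreasing ratio h(s) = (1/μ^•(α(s)))·∑_{s' ∉ Av_C(F)} P(s,s')·μ^•(α(s')), and s₋ absorbing. Then P' is a well-defined stochastic matrix and C' is a biased Markov chain of (C,T,F) for any absorbing T ⊆ F. -/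
open scoped ENNReal NNReal BigOperators
open Filter

open scoped Classical

section Thms

variable {S : Type*}

section Stmt8Aux

open Set Function

variable {S : Type*}

/-- Finite-horizon reach probability: first-hit paths of length at most `n+1`. -/
noncomputable def gFH (Q : S → S → ℝ≥0∞) (T : Set S) (n : ℕ) (x : S) : ℝ≥0∞ :=
  ∑' l : {l : List S // FirstHitPath T x l ∧ l.length ≤ n + 1}, pathProb Q (l : List S)


lemma reach_eq_indicator (Q : S → S → ℝ≥0∞) (T : Set S) (x : S) :
    reachProb Q T x
      = ∑' l : List S, {l : List S | FirstHitPath T x l}.indicator (pathProb Q) l :=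
  tsum_subtype {l : List S | FirstHitPath T x l} (pathProb Q)

lemma gFH_eq_indicator (Q : S → S → ℝ≥0∞) (T : Set S) (n : ℕ) (x : S) :
    gFH Q T n x = ∑' l : List S,
      {l : List S | FirstHitPath T x l ∧ l.length ≤ n + 1}.indicator (pathProb Q) l :=
  tsum_subtype {l : List S | FirstHitPath T x l ∧ l.length ≤ n + 1} (pathProb Q)

lemma FHP_head {T : Set S} {x : S} {l : List S} (h : FirstHitPath T x l) :
    ∃ t, l = x :: t := by
  obtain ⟨h1, -⟩ := h
  cases l with
  | nil => simp at h1
  | cons a t =>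
    simp only [List.head?] at h1
    exact ⟨t, by rw [Option.some_inj.mp h1]⟩

lemma FHP_singleton {T : Set S} {x : S} (hx : x ∈ T) : FirstHitPath T x [x] :=
  ⟨rfl, by simp, by simpa using hx, fun i hi => by simp at hi⟩

lemma FHP_of_mem {T : Set S} {x : S} (hx : x ∈ T) {l : List S}
    (h : FirstHitPath T x l) : l = [x] := by
  obtain ⟨t, rfl⟩ := FHP_head h
  cases t with
  | nil => rfl
  | cons b u =>
    exfalso
    obtain ⟨-, -, -, h4⟩ := h
    exact h4 ⟨0, by simp⟩ (by simp) hx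

lemma FHP_not_single {T : Set S} {x : S} (hx : x ∉ T) : ¬ FirstHitPath T x [x] := by
  rintro ⟨-, h, h3, -⟩
  exact hx (by simpa using h3)

lemma FHP_cons {T : Set S} {x y : S} (hx : x ∉ T) (t : List S) :
    FirstHitPath T x (x :: y :: t) ↔ FirstHitPath T y (y :: t) := by
  constructor
  · rintro ⟨-, hne, h3, h4⟩
    refine ⟨rfl, by simp, ?_, ?_⟩
    · rwa [List.getLast_cons (by simp)] at h3
    · intro j hj
      have := h4 ⟨(j : ℕ) + 1, by simp [Nat.succ_lt_succ j.isLt]; have := j.isLt; simp only [List.length_cons] at this; omega⟩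
        (by simpa using Nat.succ_lt_succ hj)
      simpa using this
  · rintro ⟨-, hne, h3, h4⟩
    refine ⟨rfl, by simp, ?_, ?_⟩
    · rwa [List.getLast_cons (by simp)]
    · rintro ⟨i, hi⟩ hlt
      cases i with
      | zero => simpa using hx
      | succ j =>
        have := h4 ⟨j, by simpa using Nat.lt_of_succ_lt_succ hi⟩
          (by simpa using Nat.lt_of_succ_lt_succ hlt)
        simpa using this

lemma reach_of_mem (Q : S → S → ℝ≥0∞) {T : Set S} {x : S} (hx : x ∈ T) :
    reachProb Q T x = 1 := by
  rw [reach_eq_indicator Q T x, tsum_eq_single ([x] : List S)]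
  · simp [Set.indicator, FHP_singleton hx, pathProb]
  · intro l hl
    apply Set.indicator_of_notMem
    intro hmem
    exact hl (FHP_of_mem hx hmem)

lemma gFH_of_mem (Q : S → S → ℝ≥0∞) {T : Set S} {x : S} (hx : x ∈ T) (n : ℕ) :
    gFH Q T n x = 1 := by
  rw [gFH_eq_indicator Q T n x, tsum_eq_single ([x] : List S)]
  · simp [Set.indicator, FHP_singleton hx, pathProb]
  · intro l hl
    apply Set.indicator_of_notMem
    rintro ⟨hmem, -⟩
    exact hl (FHP_of_mem hx hmem)

lemma gFH_zero (Q : S → S → ℝ≥0∞) {T : Set S} {x : S} (hx : x ∉ T) :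
    gFH Q T 0 x = 0 := by
  rw [gFH, ENNReal.tsum_eq_zero]
  rintro ⟨l, hl, hlen⟩
  exfalso
  obtain ⟨t, rfl⟩ := FHP_head hl
  cases t with
  | nil => exact FHP_not_single hx hl
  | cons b u => simp at hlen

lemma gFH_le_reach (Q : S → S → ℝ≥0∞) (T : Set S) (n : ℕ) (x : S) :
    gFH Q T n x ≤ reachProb Q T x := by
  rw [gFH_eq_indicator Q T n x, reach_eq_indicator Q T x]
  exact ENNReal.tsum_le_tsum fun l =>
    Set.indicator_le_indicator_of_subset (fun l hl => hl.1) (fun _ => zero_le) l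

lemma gFH_rec (Q : S → S → ℝ≥0∞) {T : Set S} {x : S} (hx : x ∉ T) (n : ℕ) :
    gFH Q T (n + 1) x = ∑' y : S, Q x y * gFH Q T n y := by
  set A : Set (List S) := {l : List S | FirstHitPath T x l ∧ l.length ≤ n + 1 + 1} with hA
  have key : ∀ y : S,
      (∑' t : List S, A.indicator (pathProb Q) (x :: y :: t)) = Q x y * gFH Q T n y := by
    intro y
    set B : Set (List S) := {l : List S | FirstHitPath T y l ∧ l.length ≤ n + 1} with hB
    have hterm : ∀ t : List S,
        A.indicator (pathProb Q) (x :: y :: t) = Q x y * B.indicator (pathProb Q) (y :: t) := by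
      intro t
      by_cases hmem : (y :: t) ∈ B
      · have hmemA : (x :: y :: t) ∈ A := by
          refine ⟨(FHP_cons hx t).mpr hmem.1, ?_⟩
          have := hmem.2
          simp only [List.length_cons] at this ⊢
          omega
        rw [Set.indicator_of_mem hmemA, Set.indicator_of_mem hmem]
        rfl
      · have hmemA : (x :: y :: t) ∉ A := by
          rintro ⟨hf, hlen⟩
          refine hmem ⟨(FHP_cons hx t).mp hf, ?_⟩
          simp only [List.length_cons] at hlen ⊢
          omega
        rw [Set.indicator_of_notMem hmemA, Set.indicator_of_notMem hmem, mul_zero]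
    rw [tsum_congr hterm, ENNReal.tsum_mul_left]
    congr 1
    have hinj : Function.Injective (fun t : List S => y :: t) := List.cons_injective
    have hsupp : Function.support (B.indicator (pathProb Q)) ⊆
        Set.range (fun t : List S => y :: t) := by
      intro l hl
      have hlB : l ∈ B := Set.support_indicator_subset hl
      obtain ⟨t, rfl⟩ := FHP_head hlB.1
      exact ⟨t, rfl⟩
    rw [gFH_eq_indicator Q T n y, ← hB]
    exact hinj.tsum_eq hsupp
  have hinj2 : Function.Injective (fun p : S × List S => x :: p.1 :: p.2) := by
    rintro ⟨y, t⟩ ⟨y', t'⟩ h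
    simp only [List.cons.injEq] at h
    simp [h.2.1, h.2.2]
  have hsupp2 : Function.support (A.indicator (pathProb Q)) ⊆
      Set.range (fun p : S × List S => x :: p.1 :: p.2) := by
    intro l hl
    have hlA : l ∈ A := Set.support_indicator_subset hl
    obtain ⟨t, rfl⟩ := FHP_head hlA.1
    cases t with
    | nil => exact absurd hlA.1 (FHP_not_single hx)
    | cons b u => exact ⟨(b, u), rfl⟩
  calc gFH Q T (n + 1) x
      = ∑' l : List S, A.indicator (pathProb Q) l := by
        rw [gFH_eq_indicator Q T (n + 1) x, ← hA]
    _ = ∑' p : S × List S, A.indicator (pathProb Q) (x :: p.1 :: p.2) :=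
        (hinj2.tsum_eq hsupp2).symm
    _ = ∑' y : S, ∑' t : List S, A.indicator (pathProb Q) (x :: y :: t) :=
        ENNReal.tsum_prod'
    _ = ∑' y : S, Q x y * gFH Q T n y := tsum_congr key

lemma reach_eq_iSup (Q : S → S → ℝ≥0∞) (T : Set S) (x : S) :
    reachProb Q T x = ⨆ n : ℕ, gFH Q T n x := by
  refine le_antisymm ?_ (iSup_le fun n => gFH_le_reach Q T n x)
  rw [reach_eq_indicator Q T x, ENNReal.tsum_eq_iSup_sum]
  refine iSup_le fun s => ?_
  set n : ℕ := s.sup List.length with hn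
  refine le_trans ?_ (le_iSup _ n)
  calc ∑ l ∈ s, ({l : List S | FirstHitPath T x l}.indicator (pathProb Q)) l
      ≤ ∑ l ∈ s, ({l : List S | FirstHitPath T x l ∧ l.length ≤ n + 1}.indicator
          (pathProb Q)) l := by
        refine Finset.sum_le_sum fun l hl => ?_
        by_cases hmem : FirstHitPath T x l
        · have hlen : l.length ≤ n + 1 :=
            le_trans (Finset.le_sup (f := List.length) hl) (Nat.le_succ n)
          rw [Set.indicator_of_mem (show l ∈ {l : List S | FirstHitPath T x l} from hmem),
            Set.indicator_of_mem
              (show l ∈ {l : List S | FirstHitPath T x l ∧ l.length ≤ n + 1} from ⟨hmem, hlen⟩)]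
        · rw [Set.indicator_of_notMem
            (show l ∉ {l : List S | FirstHitPath T x l} from hmem)]
          exact zero_le
    _ ≤ ∑' l : List S, ({l : List S | FirstHitPath T x l ∧ l.length ≤ n + 1}.indicator
          (pathProb Q)) l := ENNReal.sum_le_tsum s
    _ = gFH Q T n x := (gFH_eq_indicator Q T n x).symm

lemma gFH_le_one {Q : S → S → ℝ≥0∞} (hQ : IsStochastic Q) (T : Set S) :
    ∀ (n : ℕ) (x : S), gFH Q T n x ≤ 1 := by
  intro n
  induction n with
  | zero =>
    intro x
    by_cases hx : x ∈ T
    · exact (gFH_of_mem Q hx 0).le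
    · simp [gFH_zero Q hx]
  | succ n ih =>
    intro x
    by_cases hx : x ∈ T
    · exact (gFH_of_mem Q hx (n + 1)).le
    · rw [gFH_rec Q hx n]
      calc ∑' y : S, Q x y * gFH Q T n y
          ≤ ∑' y : S, Q x y * 1 :=
            ENNReal.tsum_le_tsum fun y => mul_le_mul_right (ih y) _
        _ = 1 := by simpa using hQ x

lemma reach_le_one {Q : S → S → ℝ≥0∞} (hQ : IsStochastic Q) (T : Set S) (x : S) :
    reachProb Q T x ≤ 1 := by
  rw [reach_eq_iSup]
  exact iSup_le fun n => gFH_le_one hQ T n x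

lemma tsum_option' {β : Type*} (f : Option β → ℝ≥0∞) :
    ∑' t : Option β, f t = f none + ∑' b : β, f (some b) := by
  rw [ENNReal.tsum_eq_add_tsum_ite (none : Option β)]
  congr 1
  have hinj : Function.Injective (some : β → Option β) := Option.some_injective β
  have h2 := hinj.tsum_eq
    (f := fun t : Option β => @ite _ (t = none) (Classical.propDecidable _) 0 (f t))
    (by intro t ht; cases t with
        | none => simp at ht
        | some b => exact ⟨b, rfl⟩)
  simp only [reduceCtorEq, if_false] at h2
  exact h2.symm

lemma gFH_le_abs (P : S → S → ℝ≥0∞) (F : Set S) {S' : Type*}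
    (P' : S' → S' → ℝ≥0∞) (F' : Set S')
    (α : SA P F → S') (habs : IsAbstraction P F P' F' α) :
    ∀ (n : ℕ) (s : SA P F), gFH P F n s.val ≤ reachProb P' F' (α s) := by
  intro n
  induction n with
  | zero =>
    intro s
    by_cases hs : s.val ∈ F
    · rw [gFH_of_mem P hs 0, reach_of_mem P' (habs.1 s hs)]
    · simp [gFH_zero P hs]
  | succ n ih =>
    intro s
    by_cases hs : s.val ∈ F
    · rw [gFH_of_mem P hs (n + 1), reach_of_mem P' (habs.1 s hs)]
    · rw [gFH_rec P hs n]
      have hzero : ∀ y : S, y ∈ Av P F → P s.val y * gFH P F n y = 0 := by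
        intro y hy
        have h1 : gFH P F n y ≤ reachProb P F y := gFH_le_reach P F n y
        have h0 : gFH P F n y = 0 := le_antisymm (h1.trans_eq hy) zero_le
        rw [h0, mul_zero]
      have hss : Function.support (fun y : S => P s.val y * gFH P F n y)
          ⊆ {y : S | y ∉ Av P F} := by
        intro y hy
        intro hmem
        exact hy (hzero y hmem)
      have hsplit : (∑' y : SA P F, P s.val y.val * gFH P F n y.val)
          = ∑' y : S, P s.val y * gFH P F n y :=
        tsum_subtype_eq_of_support_subset hss
      rw [← hsplit]
      calc (∑' y : SA P F, P s.val y.val * gFH P F n y.val)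
          ≤ ∑' y : SA P F, P s.val y.val * reachProb P' F' (α y) :=
            ENNReal.tsum_le_tsum fun y => mul_le_mul_right (ih y) _
        _ ≤ reachProb P' F' (α s) := habs.2 s hs

end Stmt8Aux


theorem stmt8 [Countable S] (P : S → S → ℝ≥0∞) (hP : IsStochastic P)
    (F : Set S) {S' : Type*} [Countable S']
    (P' : S' → S' → ℝ≥0∞) (hP' : IsStochastic P') (F' : Set S')
    (α : SA P F → S') (habs : IsAbstraction P F P' F' α) :
    (∀ s : SA P F, hRatio P F P' F' α s ≤ 1) ∧
    IsStochastic (biasedKernel P F P' F' α) ∧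
    ∀ T : Set S, T ⊆ F → (∀ s ∈ T, P s s = 1) →
      IsBiased P T F (biasedKernel P F P' F' α) := by
  have hμ1 : ∀ z : S', reachProb P' F' z ≤ 1 := reach_le_one hP' F'
  have habs' : ∀ s : SA P F, reachProb P F s.val ≤ reachProb P' F' (α s) := by
    intro s
    rw [reach_eq_iSup]
    exact iSup_le fun n => gFH_le_abs P F P' F' α habs n s
  have hμF : ∀ s : SA P F, s.val ∈ F → reachProb P' F' (α s) = 1 := fun s hs =>
    reach_of_mem P' (habs.1 s hs)
  have hle : ∀ s : SA P F,
      (∑' s' : SA P F, P s.val s'.val * reachProb P' F' (α s')) ≤ reachProb P' F' (α s) := by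
    intro s
    by_cases hs : s.val ∈ F
    · rw [hμF s hs]
      have hsub : (∑' s' : SA P F, P s.val s'.val)
          = ∑' s' : S, ({y : S | y ∉ Av P F}).indicator (P s.val) s' :=
        tsum_subtype {y : S | y ∉ Av P F} (P s.val)
      calc (∑' s' : SA P F, P s.val s'.val * reachProb P' F' (α s'))
          ≤ ∑' s' : SA P F, P s.val s'.val * 1 :=
            ENNReal.tsum_le_tsum fun s' => mul_le_mul_right (hμ1 _) _
        _ = ∑' s' : SA P F, P s.val s'.val := by simp
        _ ≤ ∑' s' : S, P s.val s' := by
            rw [hsub]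
            exact ENNReal.tsum_le_tsum fun y => Set.indicator_le_self _ _ y
        _ = 1 := hP s.val
    · exact habs.2 s hs
  have h1 : ∀ s : SA P F, hRatio P F P' F' α s ≤ 1 := fun s =>
    ENNReal.div_le_of_le_mul (by rw [one_mul]; exact hle s)
  have hstoch : IsStochastic (biasedKernel P F P' F' α) := by
    intro t
    cases t with
    | none =>
      rw [tsum_option']
      simp [biasedKernel]
    | some s =>
      rw [tsum_option']
      have hsum : (∑' s' : SA P F, biasedKernel P F P' F' α (some s) (some s'))
          = hRatio P F P' F' α s := by
        have hterm : ∀ s' : SA P F, biasedKernel P F P' F' α (some s) (some s')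
            = (P s.val s'.val * reachProb P' F' (α s')) * (reachProb P' F' (α s))⁻¹ := by
          intro s'
          show P s.val s'.val * reachProb P' F' (α s') / reachProb P' F' (α s) = _
          rw [div_eq_mul_inv]
        rw [tsum_congr hterm, ENNReal.tsum_mul_right, hRatio, div_eq_mul_inv]
      rw [hsum]
      show (1 - hRatio P F P' F' α s) + hRatio P F P' F' α s = 1
      exact tsub_add_cancel_of_le (h1 s)
  refine ⟨h1, hstoch, ?_⟩
  intro T hTF hTabs
  refine ⟨hstoch, rfl, ?_, ?_⟩
  · intro s hsT
    show P s.val s.val * reachProb P' F' (α s) / reachProb P' F' (α s) = 1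
    rw [hTabs s.val hsT, hμF s (hTF hsT)]
    simp
  · intro s s' hpos
    show 0 < P s.val s'.val * reachProb P' F' (α s') / reachProb P' F' (α s)
    refine ENNReal.div_pos (mul_ne_zero hpos.ne' ?_) ?_
    · intro h0
      exact s'.2 (le_antisymm ((habs' s').trans_eq h0) zero_le)
    · exact ((hμ1 (α s)).trans_lt ENNReal.one_lt_top).ne


end Thms
end
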